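/- For every positive integer M, every nonnegative integer k, every a, and every y ≠ 1 with y^M ≠ 1, the distribution relation β_k(a, y) = M^{k−1} · Σ_{b=0}^{M−1} y^b · β_k((a+b)/M, y^M) holds. -/

import Mathlib

/-- The twisted Bernoulli polynomial `β_k(x,y)`, defined (for `y ≠ 1`) by the
exponential generating function `t·e^{xt}/(y·e^t − 1) = Σ_{k≥0} β_k(x,y) t^k/k!`. -/
noncomputable def twistedBernoulli {K : Type*} [Field K] [CharZero K] (k : ℕ) (x y : K) : K :=
  (k.factorial : K) *
    PowerSeries.coeff (R := K) k
      (PowerSeries.X * PowerSeries.rescale x (PowerSeries.exp K) *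
        (PowerSeries.C (R := K) y * PowerSeries.exp K - 1)⁻¹)

open PowerSeries Finset

private lemma tb_constCoeff_rescale {K : Type*} [Field K] (c : K) (f : PowerSeries K) :
    constantCoeff (rescale c f) = constantCoeff f := by
  rw [← coeff_zero_eq_constantCoeff_apply, ← coeff_zero_eq_constantCoeff_apply, coeff_rescale]
  simp

private lemma tb_rescale_C {K : Type*} [Field K] (c d : K) :
    rescale c (C d) = C d := by
  ext n
  rw [coeff_rescale]
  cases n with
  | zero => simp
  | succ n => simp [coeff_C]

private lemma tb_rescale_inv {K : Type*} [Field K] (c : K) (f : PowerSeries K)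
    (hf : constantCoeff f ≠ 0) : rescale c f⁻¹ = (rescale c f)⁻¹ := by
  have h2 : constantCoeff (rescale c f) ≠ 0 := by rwa [tb_constCoeff_rescale]
  rw [eq_inv_iff_mul_eq_one h2, ← map_mul, mul_comm, PowerSeries.mul_inv_cancel _ hf, map_one]

private lemma tb_core {K : Type*} [Field K] [CharZero K] (M : ℕ) (a y : K) :
    ∑ b ∈ range M, C (y ^ b) * rescale (a + (b : K)) (exp K) * (C y * exp K - 1)
      = rescale a (exp K) * (C (y ^ M) * rescale (M : K) (exp K) - 1) := by
  have h : ∀ b ∈ range M,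
      C (y ^ b) * rescale (a + (b : K)) (exp K) * (C y * exp K - 1)
        = rescale a (exp K) * ((C y * exp K) ^ b * (C y * exp K - 1)) := by
    intro b _
    rw [← exp_mul_exp_eq_exp_add, ← exp_pow_eq_rescale_exp, mul_pow, ← map_pow]
    ring
  rw [Finset.sum_congr rfl h, ← Finset.mul_sum, ← Finset.sum_mul, geom_sum_mul,
     mul_pow, ← map_pow, exp_pow_eq_rescale_exp]

theorem twistedBernoulli_distribution_relation {K : Type*} [Field K] [CharZero K]
    (M : ℕ) (hM : 1 ≤ M) (k : ℕ) (a y : K) (hy : y ≠ 1) (hyM : y ^ M ≠ 1) :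
    twistedBernoulli k a y =
      (M : K) ^ ((k : ℤ) - 1) *
        ∑ b ∈ Finset.range M, y ^ b * twistedBernoulli k ((a + (b : K)) / (M : K)) (y ^ M) := by
  have hMK : (M : K) ≠ 0 := Nat.cast_ne_zero.mpr (by omega)
  set e := exp K with he
  set g₁ : PowerSeries K := C y * e - 1 with hg₁
  set g₂ : PowerSeries K := C (y ^ M) * e - 1 with hg₂
  set G₂ : PowerSeries K := C (y ^ M) * rescale (M : K) e - 1 with hG₂
  have hce : constantCoeff e = 1 := by simp [he, exp]
  have hg₁c : constantCoeff g₁ ≠ 0 := by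
    simp only [hg₁, map_sub, map_mul, constantCoeff_C, hce, map_one, mul_one]
    exact sub_ne_zero.mpr hy
  have hg₂c : constantCoeff g₂ ≠ 0 := by
    simp only [hg₂, map_sub, map_mul, constantCoeff_C, hce, map_one, mul_one]
    exact sub_ne_zero.mpr hyM
  have hG₂c : constantCoeff G₂ ≠ 0 := by
    simp only [hG₂, map_sub, map_mul, constantCoeff_C, tb_constCoeff_rescale, hce, map_one, mul_one]
    exact sub_ne_zero.mpr hyM
  have hresc : rescale (M : K) g₂ = G₂ := by
    simp only [hg₂, hG₂, map_sub, map_mul, map_one, tb_rescale_C]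
  set f : ℕ → PowerSeries K := fun b => X * rescale ((a + (b : K)) / (M : K)) e * g₂⁻¹ with hf
  set F : PowerSeries K := X * rescale a e * g₁⁻¹ with hF
  -- step 1
  have step1 : ∀ b : ℕ, rescale (M : K) (f b)
      = C (M : K) * X * rescale (a + (b : K)) e * G₂⁻¹ := by
    intro b
    rw [hf]
    simp only [map_mul, rescale_X, rescale_rescale, div_mul_cancel₀ _ hMK,
      tb_rescale_inv _ _ hg₂c, hresc]
  -- step 2
  have hne : g₁ * G₂ ≠ 0 := by
    intro h
    have := congrArg (constantCoeff) h
    rw [map_mul, map_zero] at this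
    exact mul_ne_zero hg₁c hG₂c this
  have step2 : ∑ b ∈ range M, C (y ^ b) * rescale (M : K) (f b) = C (M : K) * F := by
    apply mul_right_cancel₀ hne
    have hG₂inv : G₂⁻¹ * G₂ = 1 := by
      rw [mul_comm]; exact PowerSeries.mul_inv_cancel _ hG₂c
    have hg₁inv : g₁⁻¹ * g₁ = 1 := by
      rw [mul_comm]; exact PowerSeries.mul_inv_cancel _ hg₁c
    rw [Finset.sum_mul]
    have lhs : ∀ b ∈ range M,
        C (y ^ b) * rescale (M : K) (f b) * (g₁ * G₂)
          = C (M : K) * X * (C (y ^ b) * rescale (a + (b : K)) e * g₁) := by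
      intro b _
      rw [step1 b]
      calc C (y ^ b) * (C (M : K) * X * rescale (a + (b : K)) e * G₂⁻¹) * (g₁ * G₂)
          = C (M : K) * X * (C (y ^ b) * rescale (a + (b : K)) e * g₁) * (G₂⁻¹ * G₂) := by
            ring
        _ = _ := by rw [hG₂inv, mul_one]
    rw [Finset.sum_congr rfl lhs, ← Finset.mul_sum, tb_core M a y]
    calc C (M : K) * X * (rescale a e * G₂)
        = C (M : K) * (X * rescale a e * G₂) := by ring
      _ = C (M : K) * (X * rescale a e) * G₂ * (g₁⁻¹ * g₁) := by rw [hg₁inv]; ring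
      _ = C (M : K) * F * (g₁ * G₂) := by rw [hF]; ring
  -- step 3: take coeff k
  have hco := congrArg (coeff k) step2
  rw [map_sum, coeff_C_mul] at hco
  have hterm : ∀ b ∈ range M, coeff k (C (y ^ b) * rescale (M : K) (f b))
      = y ^ b * ((M : K) ^ k * coeff k (f b)) := by
    intro b _
    rw [coeff_C_mul, coeff_rescale]
  rw [Finset.sum_congr rfl hterm] at hco
  -- conclude
  have hβ : ∀ b : ℕ, twistedBernoulli k ((a + (b : K)) / (M : K)) (y ^ M)
      = (k.factorial : K) * coeff k (f b) := fun b => rfl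
  have hβa : twistedBernoulli k a y = (k.factorial : K) * coeff k F := rfl
  have hzpow : (M : K) ^ ((k : ℤ) - 1) = (M : K) ^ k * ((M : K))⁻¹ := by
    rw [zpow_sub₀ hMK, zpow_natCast, zpow_one, div_eq_mul_inv]
  rw [hβa, hzpow]
  calc (k.factorial : K) * coeff k F
      = (M : K)⁻¹ * ((k.factorial : K) * ((M : K) * coeff k F)) := by
        field_simp
    _ = (M : K)⁻¹ * ((k.factorial : K) *
          ∑ b ∈ range M, y ^ b * ((M : K) ^ k * coeff k (f b))) := by rw [hco]
    _ = (M : K) ^ k * (M : K)⁻¹ *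
          ∑ b ∈ range M, y ^ b * twistedBernoulli k ((a + (b : K)) / (M : K)) (y ^ M) := by
        simp only [hβ, Finset.mul_sum]
        exact Finset.sum_congr rfl fun b _ => by ring
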